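/- Let G be a finite simple isolate-free graph with maximum degree Δ(G), and let Ψ be a total coalition partition of G. Then every class C of Ψ forms a total coalition with at most Δ(G) other classes of Ψ; equivalently, the maximum degree of the total coalition graph TCG(G,Ψ) is at most Δ(G). -/

import Mathlib

open scoped Classical

variable {V : Type*}

/-- `S` is a total dominating set of `G`: every vertex of `G` has a neighbor in `S`. -/
def TotalDomSet (G : SimpleGraph V) (S : Finset V) : Prop :=
  ∀ v : V, ∃ u ∈ S, G.Adj v u

/-- Two disjoint sets `A`, `B` form a total coalition in `G` if neither is a total
dominating set but their union is. -/
def TotalCoalition [DecidableEq V] (G : SimpleGraph V) (A B : Finset V) : Prop :=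
  Disjoint A B ∧ ¬ TotalDomSet G A ∧ ¬ TotalDomSet G B ∧ TotalDomSet G (A ∪ B)

/-- A graph is isolate-free if every vertex has a neighbor. -/
def IsolateFree (G : SimpleGraph V) : Prop :=
  ∀ v : V, ∃ u : V, G.Adj v u

/-- `Ψ` is a total coalition partition of `G`: a partition of the vertex set into
nonempty classes, none of which is a total dominating set, such that every class
forms a total coalition with at least one other class. -/
def IsTCPartition [DecidableEq V] (G : SimpleGraph V) (Ψ : Finset (Finset V)) : Prop :=
  (∀ C ∈ Ψ, C.Nonempty) ∧
  (∀ v : V, ∃! C, C ∈ Ψ ∧ v ∈ C) ∧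
  (∀ C ∈ Ψ, ¬ TotalDomSet G C) ∧
  (∀ C ∈ Ψ, ∃ D ∈ Ψ, D ≠ C ∧ TotalCoalition G C D)

/-- The total coalition graph `TCG(G,Ψ)`: vertices are the classes of `Ψ`, and two
classes are adjacent iff they form a total coalition. -/
def TCG [DecidableEq V] (G : SimpleGraph V) (Ψ : Finset (Finset V)) :
    SimpleGraph {C // C ∈ Ψ} where
  Adj C D := C ≠ D ∧ TotalCoalition G (C : Finset V) (D : Finset V)
  symm := by
    constructor
    rintro C D ⟨hne, hd, hA, hB, hU⟩
    exact ⟨hne.symm, hd.symm, hB, hA, by rwa [Finset.union_comm]⟩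
  loopless := ⟨by rintro C ⟨hne, _⟩; exact hne rfl⟩

/-- Every class of a total coalition partition forms a total coalition with at most
`Δ(G)` other classes; equivalently, `Δ(TCG(G,Ψ)) ≤ Δ(G)`. -/
theorem statement_0 [Fintype V] [DecidableEq V]
    (G : SimpleGraph V) [DecidableRel G.Adj] (hG : IsolateFree G)
    (Ψ : Finset (Finset V)) (hΨ : IsTCPartition G Ψ) :
    (∀ C ∈ Ψ, (Ψ.filter fun D => D ≠ C ∧ TotalCoalition G C D).card ≤ G.maxDegree) ∧
    (TCG G Ψ).maxDegree ≤ G.maxDegree := by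
  obtain ⟨hne, hcov, hnd, hcoal⟩ := hΨ
  have key : ∀ C ∈ Ψ, (Ψ.filter fun D => D ≠ C ∧ TotalCoalition G C D).card ≤ G.maxDegree := by
    intro C hC
    have hnC := hnd C hC
    unfold TotalDomSet at hnC
    push_neg at hnC
    obtain ⟨v, hv⟩ := hnC
    set F := Ψ.filter fun D => D ≠ C ∧ TotalCoalition G C D with hF
    have hmap : ∀ D ∈ F, ∃ u ∈ D, G.Adj v u := by
      intro D hD
      rw [hF, Finset.mem_filter] at hD
      obtain ⟨hDΨ, hDC, _, _, _, hU⟩ := hD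
      obtain ⟨u, hu, hadj⟩ := hU v
      rcases Finset.mem_union.mp hu with h | h
      · exact absurd hadj (hv u h)
      · exact ⟨u, h, hadj⟩
    let f : Finset V → V := fun D => if h : ∃ u ∈ D, G.Adj v u then h.choose else v
    have hf : ∀ D ∈ F, f D ∈ D ∧ G.Adj v (f D) := by
      intro D hD
      have h := hmap D hD
      simp only [f, dif_pos h]
      exact ⟨h.choose_spec.1, h.choose_spec.2⟩
    have hle : F.card ≤ (G.neighborFinset v).card := by
      apply Finset.card_le_card_of_injOn f
      · intro D hD
        exact (G.mem_neighborFinset v (f D)).mpr (hf D hD).2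
      · intro D1 h1 D2 h2 heq
        have hD1 : (f D1) ∈ D1 := (hf D1 h1).1
        have hD2 : (f D2) ∈ D2 := (hf D2 h2).1
        rw [heq] at hD1
        obtain ⟨Cu, hCu, huniq⟩ := hcov (f D2)
        have e1 := huniq D1 ⟨(Finset.mem_filter.mp h1).1, hD1⟩
        have e2 := huniq D2 ⟨(Finset.mem_filter.mp h2).1, hD2⟩
        rw [e1, e2]
    calc F.card ≤ (G.neighborFinset v).card := hle
      _ = G.degree v := (G.card_neighborFinset_eq_degree v)
      _ ≤ G.maxDegree := G.degree_le_maxDegree v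
  refine ⟨key, ?_⟩
  apply SimpleGraph.maxDegree_le_of_forall_degree_le
  intro C
  have h1 : (TCG G Ψ).degree C ≤ (Ψ.filter fun D => D ≠ (C : Finset V) ∧ TotalCoalition G (C : Finset V) D).card := by
    rw [← SimpleGraph.card_neighborFinset_eq_degree]
    refine Finset.card_le_card_of_injOn (fun D => (D : Finset V)) ?_ ?_
    · intro D hD
      rw [Finset.mem_coe, SimpleGraph.mem_neighborFinset] at hD
      obtain ⟨hne', hco⟩ := hD
      exact Finset.mem_filter.mpr ⟨D.2, fun h => hne' (Subtype.ext h.symm), hco⟩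
    · exact fun a _ b _ h => Subtype.ext h
  exact h1.trans (key C C.2)
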